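/- Let a ≥ 2 be an even integer and b ≥ 2. Then δ((a^b)) ≤ a + 2b − 4. -/
import Mathlib


open scoped Classical

/-- A partition: weakly decreasing, eventually zero sequence of nonnegative integers. -/
def IsPartition (P : ℕ → ℕ) : Prop :=
  (∀ i, P (i + 1) ≤ P i) ∧ ∃ N, ∀ n ≥ N, P n = 0

/-- An arithmetic progression: a proper subset of ℤ whose set of differences is
closed under addition. -/
def IsAP (Λ : Set ℤ) : Prop :=
  Λ ≠ Set.univ ∧
    ∀ a b c d : ℤ, a ∈ Λ → b ∈ Λ → c ∈ Λ → d ∈ Λ →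
      ∃ x ∈ Λ, ∃ y ∈ Λ, x - y = (a - b) + (c - d)

/-- Upward displacement of a partition with respect to an arithmetic progression.
The convention `P_{-1} = ∞` is encoded by the disjunct `i = 0`. -/
noncomputable def upDisp (P : ℕ → ℕ) (Λ : Set ℤ) : ℕ → ℕ :=
  fun i => if ((P i : ℤ) - i) ∈ Λ ∧ (i = 0 ∨ P i < P (i - 1)) then P i + 1 else P i

/-- Downward displacement of a partition with respect to an arithmetic progression. -/
noncomputable def downDisp (P : ℕ → ℕ) (Λ : Set ℤ) : ℕ → ℕ :=
  fun i => if ((P i : ℤ) - i - 1) ∈ Λ ∧ P (i + 1) < P i then P i - 1 else P i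

/-- The sum `|P|` of the parts of a partition. -/
noncomputable def psum (P : ℕ → ℕ) : ℕ := ∑ᶠ i, P i

/-- Two partitions are linked if some arithmetic progression displaces one to the other. -/
def Linked (P Q : ℕ → ℕ) : Prop :=
  ∃ Λ : Set ℤ, IsAP Λ ∧ Q = upDisp P Λ ∧ P = downDisp Q Λ

/-- `k`-linked: linked with sums differing by `k`. -/
def KLinked (k : ℕ) (P Q : ℕ → ℕ) : Prop :=
  Linked P Q ∧ psum Q = psum P + k

/-- A valid sequence of partitions: adjacent pairs are 1-linked or 2-linked. -/
def ValidSeq (n : ℕ) (s : ℕ → ℕ → ℕ) : Prop :=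
  (∀ j ≤ n, IsPartition (s j)) ∧
    ∀ j < n, KLinked 1 (s j) (s (j + 1)) ∨ KLinked 2 (s j) (s (j + 1))

/-- The difficulty `δ(P)`: the least number of 1-linked adjacent pairs in a valid
sequence from the empty partition to `P`. -/
noncomputable def delta (P : ℕ → ℕ) : ℕ :=
  sInf { c | ∃ n s, ValidSeq n s ∧ s 0 = (fun _ => 0) ∧ s n = P ∧
    c = ((Finset.range n).filter fun j => KLinked 1 (s j) (s (j + 1))).card }

/-- The conjugate (dual) partition: `P*_n = #{m : P_m > n}`. -/
noncomputable def conj (P : ℕ → ℕ) : ℕ → ℕ := fun n => Set.ncard { m | n < P m }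
def ReachX (c : ℕ) (P : ℕ → ℕ) : Prop :=
  ∃ n s, ValidSeq n s ∧ s 0 = (fun _ => 0) ∧ s n = P ∧
    (((Finset.range n).filter fun j => KLinked 1 (s j) (s (j + 1))).card) ≤ c

lemma ispart_zero : IsPartition (fun _ => 0) :=
  ⟨fun _ => le_rfl, 0, fun _ _ => rfl⟩

lemma reach_zero : ReachX 0 (fun _ => 0) := by
  refine ⟨0, fun _ => (fun _ => 0), ⟨fun j _ => ispart_zero, fun j hj => absurd hj (by omega)⟩,
    rfl, rfl, by simp⟩

lemma reach_mono {c c' : ℕ} {P : ℕ → ℕ} (h : ReachX c P) (hc : c ≤ c') : ReachX c' P := by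
  obtain ⟨n, s, hv, h0, hn, hcard⟩ := h
  exact ⟨n, s, hv, h0, hn, le_trans hcard hc⟩

lemma reach_ext {c : ℕ} {P Q : ℕ → ℕ} (h : ReachX c P) (hPQ : P = Q) : ReachX c Q := hPQ ▸ h

private lemma reach_step {c : ℕ} {P Q : ℕ → ℕ} (h : ReachX c P) (hQ : IsPartition Q)
    (hl : KLinked 1 P Q ∨ KLinked 2 P Q) :
    ReachX (c + (if KLinked 1 P Q then 1 else 0)) Q := by
  obtain ⟨n, s, ⟨hpart, hlinks⟩, h0, hn, hcard⟩ := h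
  set s' : ℕ → ℕ → ℕ := fun m => if m ≤ n then s m else Q with hs'
  have hle : ∀ m, m ≤ n → s' m = s m := by intro m hm; simp [hs', hm]
  have hn1 : s' (n + 1) = Q := by simp [hs']
  refine ⟨n + 1, s', ⟨?_, ?_⟩, ?_, hn1, ?_⟩
  · intro m hm
    by_cases hmn : m ≤ n
    · rw [hle m hmn]; exact hpart m hmn
    · have : m = n + 1 := by omega
      rw [this, hn1]; exact hQ
  · intro m hm
    by_cases hmn : m < n
    · rw [hle m (by omega), hle (m+1) (by omega)]
      exact hlinks m hmn
    · have hmn' : m = n := by omega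
      subst hmn'
      rw [hle m le_rfl, hn1, hn]
      exact hl
  · rw [hle 0 (by omega)]; exact h0
  · have hsplit : Finset.range (n+1) = insert n (Finset.range n) := by
      rw [Finset.range_add_one]
    rw [hsplit]
    rw [Finset.filter_insert]
    have hfeq : ((Finset.range n).filter fun j => KLinked 1 (s' j) (s' (j + 1)))
        = ((Finset.range n).filter fun j => KLinked 1 (s j) (s (j + 1))) := by
      apply Finset.filter_congr
      intro j hj
      simp only [Finset.mem_range] at hj
      rw [hle j (by omega), hle (j+1) (by omega)]
    have hPn : s' n = P := by rw [hle n le_rfl, hn]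
    by_cases hk : KLinked 1 P Q
    · rw [if_pos (by rw [hPn, hn1]; exact hk)]
      rw [Finset.card_insert_of_notMem (by simp), hfeq]
      simp only [hk, if_pos]
      omega
    · rw [if_neg (by rw [hPn, hn1]; exact hk)]
      rw [hfeq]
      simp only [hk, if_neg, if_false]
      omega

lemma reach_one {c : ℕ} {P Q : ℕ → ℕ} (h : ReachX c P) (hQ : IsPartition Q)
    (hl : KLinked 1 P Q) : ReachX (c + 1) Q := by
  have := reach_step h hQ (Or.inl hl)
  rw [if_pos hl] at this
  exact this

lemma reach_two {c : ℕ} {P Q : ℕ → ℕ} (h : ReachX c P) (hQ : IsPartition Q)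
    (hl : KLinked 2 P Q) : ReachX c Q := by
  have hn1 : ¬ KLinked 1 P Q := by
    intro h1
    have := hl.2
    have := h1.2
    omega
  have := reach_step h hQ (Or.inr hl)
  rw [if_neg hn1] at this
  simpa using this

lemma delta_le_reach {c : ℕ} {P : ℕ → ℕ} (h : ReachX c P) : delta P ≤ c := by
  obtain ⟨n, s, hv, h0, hn, hcard⟩ := h
  refine le_trans (Nat.sInf_le ⟨n, s, hv, h0, hn, rfl⟩) hcard
lemma psum_eq_sum (P : ℕ → ℕ) (N : ℕ) (h : ∀ n, N ≤ n → P n = 0) :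
    psum P = ∑ r ∈ Finset.range N, P r := by
  apply finsum_eq_sum_of_support_subset
  intro x hx
  simp only [Function.mem_support] at hx
  simp only [Finset.coe_range, Set.mem_Iio]
  by_contra hc
  exact hx (h x (by omega))

lemma psum_one (P Q : ℕ → ℕ) (N : ℕ) (hN : ∀ n, N ≤ n → P n = 0) (i : ℕ)
    (hQi : Q i = P i + 1) (hQr : ∀ r, r ≠ i → Q r = P r) :
    psum Q = psum P + 1 := by
  set M := max N (i+1) with hM
  have hPM : ∀ n, M ≤ n → P n = 0 := fun n hn => hN n (by omega)
  have hQM : ∀ n, M ≤ n → Q n = 0 := by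
    intro n hn
    rw [hQr n (by omega)]; exact hN n (by omega)
  rw [psum_eq_sum P M hPM, psum_eq_sum Q M hQM]
  have : ∀ r, Q r = P r + (if r = i then 1 else 0) := by
    intro r
    by_cases h : r = i
    · subst h; simp [hQi]
    · simp [h, hQr r h]
  calc ∑ r ∈ Finset.range M, Q r
      = ∑ r ∈ Finset.range M, (P r + (if r = i then 1 else 0)) := by
        exact Finset.sum_congr rfl (fun r _ => this r)
    _ = (∑ r ∈ Finset.range M, P r) + ∑ r ∈ Finset.range M, (if r = i then 1 else 0) := by
        rw [Finset.sum_add_distrib]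
    _ = (∑ r ∈ Finset.range M, P r) + 1 := by
        rw [Finset.sum_ite_eq' (Finset.range M) i (fun _ => 1)]
        simp [Finset.mem_range]; omega

lemma psum_two (P Q : ℕ → ℕ) (N : ℕ) (hN : ∀ n, N ≤ n → P n = 0) (i j : ℕ) (hij : i ≠ j)
    (hQi : Q i = P i + 1) (hQj : Q j = P j + 1) (hQr : ∀ r, r ≠ i → r ≠ j → Q r = P r) :
    psum Q = psum P + 2 := by
  set M := max N (max (i+1) (j+1)) with hM
  have hPM : ∀ n, M ≤ n → P n = 0 := fun n hn => hN n (by omega)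
  have hQM : ∀ n, M ≤ n → Q n = 0 := by
    intro n hn
    rw [hQr n (by omega) (by omega)]; exact hN n (by omega)
  rw [psum_eq_sum P M hPM, psum_eq_sum Q M hQM]
  have key : ∀ r, Q r = P r + ((if r = i then 1 else 0) + (if r = j then 1 else 0)) := by
    intro r
    by_cases h1 : r = i
    · subst h1; simp [hQi, hij]
    · by_cases h2 : r = j
      · subst h2; simp [hQj, h1]
      · simp [h1, h2, hQr r h1 h2]
  calc ∑ r ∈ Finset.range M, Q r
      = ∑ r ∈ Finset.range M, (P r + ((if r = i then 1 else 0) + (if r = j then 1 else 0))) :=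
        Finset.sum_congr rfl (fun r _ => key r)
    _ = (∑ r ∈ Finset.range M, P r) + (∑ r ∈ Finset.range M, ((if r = i then 1 else 0) + (if r = j then 1 else 0))) := by
        rw [Finset.sum_add_distrib]
    _ = (∑ r ∈ Finset.range M, P r) + 2 := by
        rw [Finset.sum_add_distrib, Finset.sum_ite_eq' (Finset.range M) i (fun _ => 1),
          Finset.sum_ite_eq' (Finset.range M) j (fun _ => 1)]
        simp [Finset.mem_range]
        have h1 : i < M := by omega
        have h2 : j < M := by omega
        simp [h1, h2]

-- Arithmetic progression lemmas
lemma isAP_sing (c : ℤ) : IsAP {x : ℤ | x = c} := by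
  constructor
  · intro h
    have : (c + 1) ∈ {x : ℤ | x = c} := by rw [h]; trivial
    simp only [Set.mem_setOf_eq] at this
    omega
  · intro a b c' d' ha hb hc hd
    simp only [Set.mem_setOf_eq] at ha hb hc hd
    exact ⟨c, rfl, c, rfl, by omega⟩

lemma isAP_le (d c : ℤ) : IsAP {x : ℤ | d ∣ (x - c) ∧ x ≤ c} := by
  constructor
  · intro h
    have : (c + 1) ∈ {x : ℤ | d ∣ (x - c) ∧ x ≤ c} := by rw [h]; trivial
    simp only [Set.mem_setOf_eq] at this
    omega
  · intro a b c' d' ha hb hc hd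
    simp only [Set.mem_setOf_eq] at ha hb hc hd
    set D : ℤ := (a - b) + (c' - d') with hD
    have hdD : d ∣ D := by
      obtain ⟨k1, e1⟩ := ha.1; obtain ⟨k2, e2⟩ := hb.1
      obtain ⟨k3, e3⟩ := hc.1; obtain ⟨k4, e4⟩ := hd.1
      exact ⟨k1 - k2 + k3 - k4, by linarith⟩
    rcases le_or_gt 0 D with hge | hlt
    · exact ⟨c, ⟨⟨0, by ring⟩, le_rfl⟩, c - D, ⟨by simpa using hdD.neg_right, by omega⟩, by ring⟩
    · exact ⟨c + D, ⟨by simpa using hdD, by omega⟩, c, ⟨⟨0, by ring⟩, le_rfl⟩, by ring⟩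

lemma isAP_ge (d c : ℤ) : IsAP {x : ℤ | d ∣ (x - c) ∧ c ≤ x} := by
  constructor
  · intro h
    have : (c - 1) ∈ {x : ℤ | d ∣ (x - c) ∧ c ≤ x} := by rw [h]; trivial
    simp only [Set.mem_setOf_eq] at this
    omega
  · intro a b c' d' ha hb hc hd
    simp only [Set.mem_setOf_eq] at ha hb hc hd
    set D : ℤ := (a - b) + (c' - d') with hD
    have hdD : d ∣ D := by
      obtain ⟨k1, e1⟩ := ha.1; obtain ⟨k2, e2⟩ := hb.1
      obtain ⟨k3, e3⟩ := hc.1; obtain ⟨k4, e4⟩ := hd.1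
      exact ⟨k1 - k2 + k3 - k4, by linarith⟩
    rcases le_or_gt 0 D with hge | hlt
    · exact ⟨c + D, ⟨by simpa using hdD, by omega⟩, c, ⟨⟨0, by ring⟩, le_rfl⟩, by ring⟩
    · exact ⟨c, ⟨⟨0, by ring⟩, le_rfl⟩, c - D, ⟨by simpa using hdD.neg_right, by omega⟩, by ring⟩

-- content gap
lemma content_gap (P : ℕ → ℕ) (hmono : ∀ k, P (k + 1) ≤ P k) :
    ∀ r s : ℕ, r ≤ s → (P s : ℤ) - s ≤ (P r : ℤ) - r - ((s : ℤ) - r) := by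
  intro r s hrs
  obtain ⟨d, rfl⟩ : ∃ d, s = r + d := ⟨s - r, by omega⟩
  induction d with
  | zero => simp
  | succ d ih =>
    have h1 := hmono (r + d)
    have h2 := ih (by omega)
    have h3 : r + (d + 1) = (r + d) + 1 := by omega
    rw [h3]
    push_cast at *
    omega

-- generic single corner addition
lemma klinked_one (P Q : ℕ → ℕ) (hmono : ∀ k, P (k + 1) ≤ P k)
    (N : ℕ) (hfin : ∀ n, N ≤ n → P n = 0)
    (i : ℕ) (hadd : i = 0 ∨ P i < P (i - 1))
    (hQi : Q i = P i + 1) (hQr : ∀ r, r ≠ i → Q r = P r) :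
    KLinked 1 P Q := by
  refine ⟨⟨{x : ℤ | x = (P i : ℤ) - i}, isAP_sing _, ?_, ?_⟩,
    psum_one P Q N hfin i hQi hQr⟩
  · funext r
    simp only [upDisp, Set.mem_setOf_eq]
    by_cases hr : r = i
    · subst hr
      rw [if_pos ⟨rfl, hadd⟩, hQi]
    · rw [if_neg, hQr r hr]
      rintro ⟨hdvd, -⟩
      rcases lt_or_gt_of_ne hr with h | h
      · have := content_gap P hmono r i (by omega)
        omega
      · have := content_gap P hmono i r (by omega)
        omega
  · funext r
    simp only [downDisp, Set.mem_setOf_eq]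
    by_cases hr : r = i
    · subst hr
      have hQr1 : Q (r + 1) = P (r + 1) := hQr (r+1) (by omega)
      rw [if_pos ⟨by rw [hQi]; push_cast; ring,
        by rw [hQr1, hQi]; exact lt_of_le_of_lt (hmono r) (by omega)⟩, hQi]
      omega
    · rw [if_neg, hQr r hr]
      rintro ⟨hdvd, hlt⟩
      rw [hQr r hr] at hdvd hlt
      -- content r = c + 1
      rcases lt_or_gt_of_ne hr with h | h
      · have hgap := content_gap P hmono r i (by omega)
        have hi1 : i = r + 1 := by omega
        rcases hadd with h0 | hlt'
        · omega
        · have hir : i - 1 = r := by omega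
          rw [hir] at hlt'
          omega
      · have := content_gap P hmono i r (by omega)
        omega

-- generic double corner addition
lemma klinked_two (P Q : ℕ → ℕ) (Λ : Set ℤ) (hAP : IsAP Λ)
    (i j : ℕ) (hij : i < j)
    (haddi : i = 0 ∨ P i < P (i - 1)) (haddj : P j < P (j - 1))
    (hmi : ((P i : ℤ) - i) ∈ Λ) (hmj : ((P j : ℤ) - j) ∈ Λ)
    (hQi : Q i = P i + 1) (hQj : Q j = P j + 1)
    (hQr : ∀ r, r ≠ i → r ≠ j → Q r = P r)
    (hmono : ∀ k, P (k + 1) ≤ P k)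
    (hup : ∀ r, r ≠ i → r ≠ j → ((P r : ℤ) - r) ∈ Λ → (r = 0 ∨ P r < P (r - 1)) → False)
    (hdown : ∀ r, r ≠ i → r ≠ j → ((P r : ℤ) - r - 1) ∈ Λ → Q (r + 1) < P r → False)
    (N : ℕ) (hfin : ∀ n, N ≤ n → P n = 0) :
    KLinked 2 P Q := by
  refine ⟨⟨Λ, hAP, ?_, ?_⟩, psum_two P Q N hfin i j (by omega) hQi hQj hQr⟩
  · funext r
    simp only [upDisp]
    by_cases hri : r = i
    · subst hri; rw [if_pos ⟨hmi, haddi⟩, hQi]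
    · by_cases hrj : r = j
      · subst hrj; rw [if_pos ⟨hmj, Or.inr haddj⟩, hQj]
      · rw [if_neg, hQr r hri hrj]
        rintro ⟨hm, ha⟩
        exact hup r hri hrj hm ha
  · funext r
    simp only [downDisp]
    by_cases hri : r = i
    · subst hri
      have hmem : ((Q r : ℤ) - r - 1) ∈ Λ := by
        have : (Q r : ℤ) - r - 1 = (P r : ℤ) - r := by rw [hQi]; push_cast; ring
        rw [this]; exact hmi
      have hlt : Q (r + 1) < Q r := by
        by_cases hj1 : r + 1 = j
        · rw [hj1, hQj, hQi]
          have hjr : j - 1 = r := by omega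
          rw [hjr] at haddj
          omega
        · rw [hQr (r+1) (by omega) hj1, hQi]
          exact lt_of_le_of_lt (hmono r) (by omega)
      rw [if_pos ⟨hmem, hlt⟩, hQi]
      omega
    · by_cases hrj : r = j
      · subst hrj
        have hmem : ((Q r : ℤ) - r - 1) ∈ Λ := by
          have : (Q r : ℤ) - r - 1 = (P r : ℤ) - r := by rw [hQj]; push_cast; ring
          rw [this]; exact hmj
        have hlt : Q (r + 1) < Q r := by
          rw [hQr (r+1) (by omega) (by omega), hQj]
          exact lt_of_le_of_lt (hmono r) (by omega)
        rw [if_pos ⟨hmem, hlt⟩, hQj]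
        omega
      · rw [if_neg, hQr r hri hrj]
        rintro ⟨hm, hlt⟩
        rw [hQr r hri hrj] at hm hlt
        exact hdown r hri hrj hm hlt

-- Shapes
def rectS (b w : ℕ) : ℕ → ℕ := fun r => if r < b then w else 0
def cwS (b j t : ℕ) : ℕ → ℕ :=
  fun r => if r < t then j+2 else if r = t then j+1 else if r < b then j else 0
def rwS (A i p : ℕ) : ℕ → ℕ :=
  fun r => if r < i then A else if r = i then p else if r = i+1 then p-1 else 0
def cfS (b a k : ℕ) : ℕ → ℕ :=
  fun r => if r < k then a else if r < b then a-1 else 0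

lemma ispart_rect (b w : ℕ) : IsPartition (rectS b w) :=
  ⟨fun k => by simp only [rectS]; split_ifs <;> omega,
   b, fun n hn => by simp only [rectS]; split_ifs <;> omega⟩

lemma ispart_cw (b j t : ℕ) (ht : t < b) : IsPartition (cwS b j t) :=
  ⟨fun k => by simp only [cwS]; split_ifs <;> omega,
   b, fun n hn => by simp only [cwS]; split_ifs <;> omega⟩

lemma ispart_rw (A i p : ℕ) (hp : p ≤ A) : IsPartition (rwS A i p) :=
  ⟨fun k => by simp only [rwS]; split_ifs <;> omega,
   i + 2, fun n hn => by simp only [rwS]; split_ifs <;> omega⟩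

lemma ispart_cf (b a k : ℕ) (hk : k ≤ b) : IsPartition (cfS b a k) :=
  ⟨fun k => by simp only [cfS]; split_ifs <;> omega,
   b, fun n hn => by simp only [cfS]; split_ifs <;> omega⟩

-- column scheme moves
lemma col_start (b j : ℕ) (hb : 1 ≤ b) : KLinked 1 (rectS b j) (cwS b j 0) := by
  apply klinked_one (rectS b j) (cwS b j 0) (ispart_rect b j).1 b
    (fun n hn => by simp only [rectS]; split_ifs <;> omega) 0 (Or.inl rfl)
  · simp only [rectS, cwS]; split_ifs <;> omega
  · intro r hr; simp only [rectS, cwS]; split_ifs <;> omega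

lemma col_end (b j : ℕ) (hb : 2 ≤ b) : KLinked 1 (cwS b j (b-1)) (rectS b (j+2)) := by
  apply klinked_one (cwS b j (b-1)) (rectS b (j+2)) (ispart_cw b j (b-1) (by omega)).1 b
    (fun n hn => by simp only [cwS]; split_ifs <;> omega) (b-1)
  · right; simp only [cwS]; split_ifs <;> omega
  · simp only [rectS, cwS]; split_ifs <;> omega
  · intro r hr; simp only [rectS, cwS]; split_ifs <;> omega

lemma col_wave (b j t : ℕ) (hb : 2 ≤ b) (ht : t + 2 ≤ b)
    (hcond : j = 0 ∨ (b % 2 = 1 ∧ j % 2 = 0)) :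
    KLinked 2 (cwS b j t) (cwS b j (t+1)) := by
  have hmono := (ispart_cw b j t (by omega)).1
  have hfin : ∀ n, b ≤ n → cwS b j t n = 0 := by
    intro n hn; simp only [cwS]; split_ifs <;> omega
  by_cases htp : t % 2 = 0
  · -- Λ up : {x | 2 ∣ x - (c1 - 2) ∧ c1 - 2 ≤ x}, c1 = j + 1 - t
    apply klinked_two (cwS b j t) (cwS b j (t+1))
      {x : ℤ | (2:ℤ) ∣ (x - ((j:ℤ) + 1 - t - 2)) ∧ (j:ℤ) + 1 - t - 2 ≤ x}
      (isAP_ge 2 _) t (t+1) (by omega)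
    · rcases Nat.eq_zero_or_pos t with h0 | h1
      · exact Or.inl h0
      · right; simp only [cwS]; split_ifs <;> omega
    · simp only [cwS]; split_ifs <;> omega
    · simp only [cwS, Set.mem_setOf_eq]; split_ifs <;> omega
    · simp only [cwS, Set.mem_setOf_eq]; split_ifs <;> omega
    · simp only [cwS]; split_ifs <;> omega
    · simp only [cwS]; split_ifs <;> omega
    · intro r h1 h2; simp only [cwS]; split_ifs <;> omega
    · exact hmono
    · intro r h1 h2 hm ha
      simp only [cwS, Set.mem_setOf_eq] at hm ha
      split_ifs at hm ha <;> omega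
    · intro r h1 h2 hm hlt
      simp only [cwS, Set.mem_setOf_eq] at hm hlt
      split_ifs at hm hlt <;> omega
    · exact hfin
  · -- Λ down : {x | 2 ∣ x - c1 ∧ x ≤ c1}
    apply klinked_two (cwS b j t) (cwS b j (t+1))
      {x : ℤ | (2:ℤ) ∣ (x - ((j:ℤ) + 1 - t)) ∧ x ≤ (j:ℤ) + 1 - t}
      (isAP_le 2 _) t (t+1) (by omega)
    · rcases Nat.eq_zero_or_pos t with h0 | h1
      · exact Or.inl h0
      · right; simp only [cwS]; split_ifs <;> omega
    · simp only [cwS]; split_ifs <;> omega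
    · simp only [cwS, Set.mem_setOf_eq]; split_ifs <;> omega
    · simp only [cwS, Set.mem_setOf_eq]; split_ifs <;> omega
    · simp only [cwS]; split_ifs <;> omega
    · simp only [cwS]; split_ifs <;> omega
    · intro r h1 h2; simp only [cwS]; split_ifs <;> omega
    · exact hmono
    · intro r h1 h2 hm ha
      simp only [cwS, Set.mem_setOf_eq] at hm ha
      split_ifs at hm ha <;> omega
    · intro r h1 h2 hm hlt
      simp only [cwS, Set.mem_setOf_eq] at hm hlt
      split_ifs at hm hlt <;> omega
    · exact hfin

lemma rect_zero (b : ℕ) : rectS b 0 = (fun _ => 0) := by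
  funext r; simp [rectS]

lemma col_sweep (b j c : ℕ) (hb : 2 ≤ b) (hcond : j = 0 ∨ (b % 2 = 1 ∧ j % 2 = 0))
    (h : ReachX c (rectS b j)) : ReachX (c + 2) (rectS b (j + 2)) := by
  have h0 : ReachX (c+1) (cwS b j 0) :=
    reach_one h (ispart_cw b j 0 (by omega)) (col_start b j (by omega))
  have key : ∀ t, t ≤ b - 1 → ReachX (c+1) (cwS b j t) := by
    intro t
    induction t with
    | zero => exact fun _ => h0
    | succ t ih =>
      intro ht
      exact reach_two (ih (by omega)) (ispart_cw b j (t+1) (by omega))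
        (col_wave b j t hb (by omega) hcond)
  exact reach_one (key (b-1) le_rfl) (ispart_rect b (j+2)) (col_end b j hb)

lemma col_scheme (b : ℕ) (hb : 2 ≤ b) (hbo : b % 2 = 1) :
    ∀ m, ReachX (2*m) (rectS b (2*m)) := by
  intro m
  induction m with
  | zero => exact reach_ext reach_zero (rect_zero b).symm
  | succ m ih =>
    have hstep := col_sweep b (2*m) (2*m) hb (Or.inr ⟨hbo, by omega⟩) ih
    have h2 : 2*(m+1) = 2*m+2 := by ring
    rw [h2]
    exact hstep

lemma col_scheme_two (b : ℕ) (hb : 2 ≤ b) : ReachX 2 (rectS b 2) := by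
  have := col_sweep b 0 0 hb (Or.inl rfl) (reach_ext reach_zero (rect_zero b).symm)
  simpa using this

-- row scheme moves (A odd, i even)
lemma row_start (A i : ℕ) (hA : 1 ≤ A) : KLinked 1 (rectS i A) (rwS A i 1) := by
  apply klinked_one (rectS i A) (rwS A i 1) (ispart_rect i A).1 i
    (fun n hn => by simp only [rectS]; split_ifs <;> omega) i
  · rcases Nat.eq_zero_or_pos i with h0 | h1
    · exact Or.inl h0
    · right; simp only [rectS]; split_ifs <;> omega
  · simp only [rectS, rwS]; split_ifs <;> omega
  · intro r hr; simp only [rectS, rwS]; split_ifs <;> omega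

lemma row_end (A i : ℕ) (hA : 1 ≤ A) : KLinked 1 (rwS A i A) (rectS (i+2) A) := by
  apply klinked_one (rwS A i A) (rectS (i+2) A) (ispart_rw A i A le_rfl).1 (i+2)
    (fun n hn => by simp only [rwS]; split_ifs <;> omega) (i+1)
  · right; simp only [rwS]; split_ifs <;> omega
  · simp only [rectS, rwS]; split_ifs <;> omega
  · intro r hr; simp only [rectS, rwS]; split_ifs <;> omega

lemma row_wave (A i p : ℕ) (hA : A % 2 = 1) (hi : i % 2 = 0) (hp : 1 ≤ p) (hpA : p + 1 ≤ A) :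
    KLinked 2 (rwS A i p) (rwS A i (p+1)) := by
  have hmono := (ispart_rw A i p (by omega)).1
  have hfin : ∀ n, i + 2 ≤ n → rwS A i p n = 0 := by
    intro n hn; simp only [rwS]; split_ifs <;> omega
  by_cases hpp : p % 2 = 0
  · -- p even: Λ up, c1 = p - i
    apply klinked_two (rwS A i p) (rwS A i (p+1))
      {x : ℤ | (2:ℤ) ∣ (x - ((p:ℤ) - i - 2)) ∧ (p:ℤ) - i - 2 ≤ x}
      (isAP_ge 2 _) i (i+1) (by omega)
    · rcases Nat.eq_zero_or_pos i with h0 | h1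
      · exact Or.inl h0
      · right; simp only [rwS]; split_ifs <;> omega
    · simp only [rwS]; split_ifs <;> omega
    · simp only [rwS, Set.mem_setOf_eq]; split_ifs <;> omega
    · simp only [rwS, Set.mem_setOf_eq]; split_ifs <;> omega
    · simp only [rwS]; split_ifs <;> omega
    · simp only [rwS]; split_ifs <;> omega
    · intro r h1 h2; simp only [rwS]; split_ifs <;> omega
    · exact hmono
    · intro r h1 h2 hm ha
      simp only [rwS, Set.mem_setOf_eq] at hm ha
      split_ifs at hm ha <;> omega
    · intro r h1 h2 hm hlt
      simp only [rwS, Set.mem_setOf_eq] at hm hlt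
      split_ifs at hm hlt <;> omega
    · exact hfin
  · -- p odd: Λ down
    apply klinked_two (rwS A i p) (rwS A i (p+1))
      {x : ℤ | (2:ℤ) ∣ (x - ((p:ℤ) - i)) ∧ x ≤ (p:ℤ) - i}
      (isAP_le 2 _) i (i+1) (by omega)
    · rcases Nat.eq_zero_or_pos i with h0 | h1
      · exact Or.inl h0
      · right; simp only [rwS]; split_ifs <;> omega
    · simp only [rwS]; split_ifs <;> omega
    · simp only [rwS, Set.mem_setOf_eq]; split_ifs <;> omega
    · simp only [rwS, Set.mem_setOf_eq]; split_ifs <;> omega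
    · simp only [rwS]; split_ifs <;> omega
    · simp only [rwS]; split_ifs <;> omega
    · intro r h1 h2; simp only [rwS]; split_ifs <;> omega
    · exact hmono
    · intro r h1 h2 hm ha
      simp only [rwS, Set.mem_setOf_eq] at hm ha
      split_ifs at hm ha <;> omega
    · intro r h1 h2 hm hlt
      simp only [rwS, Set.mem_setOf_eq] at hm hlt
      split_ifs at hm hlt <;> omega
    · exact hfin

lemma row_sweep (A i c : ℕ) (hA : A % 2 = 1) (hA2 : 1 ≤ A) (hi : i % 2 = 0)
    (h : ReachX c (rectS i A)) : ReachX (c + 2) (rectS (i+2) A) := by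
  have h0 : ReachX (c+1) (rwS A i 1) :=
    reach_one h (ispart_rw A i 1 (by omega)) (row_start A i hA2)
  have key : ∀ d, d + 1 ≤ A → ReachX (c+1) (rwS A i (d+1)) := by
    intro d
    induction d with
    | zero => exact fun _ => h0
    | succ d ih =>
      intro hd
      have : d + 2 = (d+1) + 1 := by omega
      rw [this]
      exact reach_two (ih (by omega)) (ispart_rw A i (d+2) (by omega))
        (row_wave A i (d+1) hA hi (by omega) (by omega))
  have hlast := key (A-1) (by omega)
  have hAeq : A - 1 + 1 = A := by omega
  rw [hAeq] at hlast
  exact reach_one hlast (ispart_rect (i+2) A) (row_end A i hA2)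

lemma row_scheme (A : ℕ) (hA : A % 2 = 1) (hA2 : 1 ≤ A) :
    ∀ m, ReachX (2*m) (rectS (2*m) A) := by
  intro m
  induction m with
  | zero =>
    refine reach_ext reach_zero ?_
    funext r; simp [rectS]
  | succ m ih =>
    have hstep := row_sweep A (2*m) (2*m) hA hA2 (by omega) ih
    have h2 : 2*(m+1) = 2*m+2 := by ring
    rw [h2]
    exact hstep

-- last column fill
lemma fill_step (b a k : ℕ) (hk : k < b) (ha : 1 ≤ a) :
    KLinked 1 (cfS b a k) (cfS b a (k+1)) := by
  apply klinked_one (cfS b a k) (cfS b a (k+1)) (ispart_cf b a k (by omega)).1 b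
    (fun n hn => by simp only [cfS]; split_ifs <;> omega) k
  · rcases Nat.eq_zero_or_pos k with h0 | h1
    · exact Or.inl h0
    · right; simp only [cfS]; split_ifs <;> omega
  · simp only [cfS]; split_ifs <;> omega
  · intro r hr; simp only [cfS]; split_ifs <;> omega

lemma fill_chain (b a c : ℕ) (hb : 1 ≤ b) (ha : 1 ≤ a)
    (h : ReachX c (rectS b (a-1))) : ReachX (c + b) (rectS b a) := by
  have h0 : ReachX c (cfS b a 0) := by
    refine reach_ext h ?_
    funext r; simp only [rectS, cfS]; split_ifs <;> omega
  have key : ∀ k, k ≤ b → ReachX (c + k) (cfS b a k) := by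
    intro k
    induction k with
    | zero => exact fun _ => h0
    | succ k ih =>
      intro hk
      exact reach_one (ih (by omega)) (ispart_cf b a (k+1) (by omega))
        (fill_step b a k (by omega) ha)
  have hend := key b le_rfl
  refine reach_ext hend ?_
  funext r; simp only [rectS, cfS]; split_ifs <;> omega


/-- Difficulty bound for box-shaped partitions with even `a`: `δ((a^b)) ≤ a + 2b - 4`. -/
theorem stmt9 (a b : ℕ) (ha : 2 ≤ a) (haeven : Even a) (hb : 2 ≤ b) :
    delta (fun n => if n < b then a else 0) ≤ a + 2 * b - 4 := by
  have hbox : (fun n => if n < b then a else 0) = rectS b a := rfl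
  rw [hbox]
  obtain ⟨m, hm⟩ := haeven
  by_cases hbo : b % 2 = 1
  · have h := col_scheme b hb hbo m
    have hma : 2*m = a := by omega
    rw [hma] at h
    exact le_trans (delta_le_reach h) (by omega)
  · by_cases ha2 : a = 2
    · subst ha2
      exact le_trans (delta_le_reach (col_scheme_two b hb)) (by omega)
    · have hA : (a-1) % 2 = 1 := by omega
      have h := row_scheme (a-1) hA (by omega) (b/2)
      have hb2 : 2*(b/2) = b := by omega
      rw [hb2] at h
      have h2 := fill_chain b a b (by omega) (by omega) h
      exact le_trans (delta_le_reach h2) (by omega)
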